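/- Let φ : ℤ₊ → (0,∞), let x₀ ∈ ℝ, and let V = ⋃_{n≥1} V_n where V_n ⊂ V_{n+1} are sets of entire functions on ℂ; for f ∈ V let deg(f) be the least n with f ∈ V_n. Suppose that for all 0 < R₁ ≤ R₂ there is a constant C(R₁,R₂) ≥ 1 such that every nonzero f ∈ V satisfies max_{|z−x₀|≤R₂} |f(z)| ≤ C(R₁,R₂)^{φ(deg f)} · max_{|z−x₀|≤R₁} |f(z)| (maxima over complex disks centred at x₀). Then for all 0 < R₁ ≤ R₂ there is a constant C′(R₁,R₂) ≥ 1 such that every nonzero f ∈ V satisfies max_{|z−x₀|≤R₂} |f(z)| ≤ C′(R₁,R₂)^{φ(deg f)} · max_{x ∈ [x₀−R₁, x₀+R₁]} |f(x)|, where the last maximum is over the real segment of radius R₁ centred at x₀. -/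

import Mathlib

/-- The degree of a function `f` relative to an increasing family `V` of sets of
functions: the least `n ≥ 1` with `f ∈ V n`. -/
noncomputable def degV (V : ℕ → Set (ℂ → ℂ)) (f : ℂ → ℂ) : ℕ :=
  sInf {n : ℕ | 1 ≤ n ∧ f ∈ V n}



section siciakAux

lemma interp_le_sqrt {a b t : ℝ} (ha : 0 ≤ a) (hab : a ≤ b) (ht0 : 0 ≤ t) (ht : t ≤ 1/2) :
    a ^ (1 - t) * b ^ t ≤ Real.sqrt (a * b) := by
  rcases eq_or_lt_of_le ha with h0 | hpos
  · rw [← h0, Real.zero_rpow (by linarith : (1:ℝ) - t ≠ 0), zero_mul]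
    exact Real.sqrt_nonneg _
  · have hb : 0 < b := lt_of_lt_of_le hpos hab
    have key : a ^ (1 - t) * b ^ t = a * (b / a) ^ t := by
      rw [Real.div_rpow hb.le hpos.le]
      rw [Real.rpow_sub hpos, Real.rpow_one]
      field_simp
    rw [key]
    have h1 : (b / a) ^ t ≤ (b / a) ^ (1/2 : ℝ) :=
      Real.rpow_le_rpow_of_exponent_le ((one_le_div hpos).mpr hab) ht
    have h2 : a * (b / a) ^ (1/2 : ℝ) = Real.sqrt (a * b) := by
      rw [← Real.sqrt_eq_rpow, Real.sqrt_div hb.le, Real.sqrt_mul ha]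
      have hsa : 0 < Real.sqrt a := Real.sqrt_pos.mpr hpos
      have : Real.sqrt a * Real.sqrt a = a := Real.mul_self_sqrt ha
      rw [← this]
      field_simp
      linear_combination - Real.sq_sqrt (by positivity : (0:ℝ) ≤ Real.sqrt a ^ 2)
    calc a * (b / a) ^ t ≤ a * (b / a) ^ (1/2:ℝ) :=
          mul_le_mul_of_nonneg_left h1 hpos.le
      _ = Real.sqrt (a * b) := h2



-- square root existence
lemma exists_sq_eq (z : ℂ) : ∃ d : ℂ, d * d = z := by
  by_cases hz : z = 0
  · exact ⟨0, by simp [hz]⟩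
  · refine ⟨z ^ (1/2 : ℂ), ?_⟩
    rw [← Complex.cpow_add _ _ hz]
    norm_num

lemma joukowski_surj (w : ℂ) (hw : ‖w‖ ≤ 1) :
    ∃ u : ℂ, u ≠ 0 ∧ 1 ≤ ‖u‖ ∧ ‖u‖ ≤ 1 + Real.sqrt 2 ∧
      u + u⁻¹ = 2 * w := by
  obtain ⟨d, hd⟩ := exists_sq_eq (w ^ 2 - 1)
  have habsd : ‖d‖ ≤ Real.sqrt 2 := by
    have h1 : (‖d‖) ^ 2 = ‖w ^ 2 - 1‖ := by
      rw [← hd, norm_mul]; ring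
    have h2 : ‖w ^ 2 - 1‖ ≤ 2 := by
      have := norm_add_le (w ^ 2) (-1)
      simp only [norm_neg
        ] at this
      rw [sub_eq_add_neg]
      have h3 : ‖w ^ 2‖ = ‖w‖ ^ 2 := norm_pow _ _
      have h4 := norm_nonneg w
      simp only [norm_one] at this
      nlinarith
    nlinarith [Real.sq_sqrt (by norm_num : (2:ℝ) ≥ 0), Real.sqrt_nonneg 2, norm_nonneg d]
  have hmul : (w + d) * (w - d) = 1 := by ring_nf; linear_combination -hd
  have hne1 : w + d ≠ 0 := by intro h; rw [h, zero_mul] at hmul; exact one_ne_zero hmul.symm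
  have hne2 : w - d ≠ 0 := by intro h; rw [h, mul_zero] at hmul; exact one_ne_zero hmul.symm
  have habs : ‖w + d‖ * ‖w - d‖ = 1 := by
    rw [← norm_mul, hmul, norm_one]
  have hb1 : ‖w + d‖ ≤ 1 + Real.sqrt 2 :=
    le_trans (norm_add_le w d) (by linarith)
  have hb2 : ‖w - d‖ ≤ 1 + Real.sqrt 2 :=
    le_trans (norm_sub_le w d) (by linarith)
  by_cases hcase : 1 ≤ ‖w + d‖
  · refine ⟨w + d, hne1, hcase, hb1, ?_⟩
    have : (w + d)⁻¹ = w - d := by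
      field_simp
      linear_combination -hmul
    rw [this]; ring
  · push_neg at hcase
    refine ⟨w - d, hne2, ?_, hb2, ?_⟩
    · by_contra hlt
      push_neg at hlt
      nlinarith [norm_nonneg (w+d), norm_nonneg (w-d)]
    · have : (w - d)⁻¹ = w + d := by
        field_simp
        linear_combination -hmul
      rw [this]; ring


open Complex Set Metric

section aux

noncomputable def cJ : ℝ := 2 * Real.log (1 + Real.sqrt 2)

lemma cJ_pos : 0 < cJ := by
  have : (1:ℝ) < 1 + Real.sqrt 2 := by
    nlinarith [Real.sqrt_nonneg 2, Real.sq_sqrt (by norm_num : (2:ℝ) ≥ 0)]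
  have := Real.log_pos this
  unfold cJ; linarith

lemma exp_cJ : Real.exp cJ = 3 + 2 * Real.sqrt 2 := by
  have h1 : (0:ℝ) < 1 + Real.sqrt 2 := by positivity
  have : Real.exp cJ = (1 + Real.sqrt 2) ^ 2 := by
    unfold cJ
    rw [two_mul, Real.exp_add, Real.exp_log h1, sq]
  rw [this]
  nlinarith [Real.sq_sqrt (by norm_num : (2:ℝ) ≥ 0)]

lemma exp_neg_cJ : Real.exp (-cJ) = 3 - 2 * Real.sqrt 2 := by
  have h2 : Real.exp cJ * (3 - 2 * Real.sqrt 2) = 1 := by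
    rw [exp_cJ]
    nlinarith [Real.sq_sqrt (by norm_num : (2:ℝ) ≥ 0)]
  rw [Real.exp_neg]
  field_simp [Real.exp_ne_zero] at h2 ⊢
  linarith

end aux

/-- main analytic lemma -/
lemma disk_le_sqrt_segment_disk (f : ℂ → ℂ) (hf : Differentiable ℂ f)
    (x₀ R₁ : ℝ) (hR : 0 < R₁) (a b : ℝ) (ha0 : 0 ≤ a) (hab : a ≤ b)
    (hseg : ∀ x ∈ Set.Icc (x₀ - R₁) (x₀ + R₁), ‖f (x:ℂ)‖ ≤ a)
    (hball : ∀ z ∈ closedBall (x₀:ℂ) (3 * R₁), ‖f z‖ ≤ b) :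
    ∀ w ∈ closedBall (x₀:ℂ) R₁, ‖f w‖ ≤ Real.sqrt (a * b) := by
  intro w hw
  set c := cJ with hc
  have hcpos := cJ_pos
  set P : ℂ → ℂ := fun s => (x₀:ℂ) + R₁ * (Complex.exp (c * s) + Complex.exp (-(c * s))) / 2
    with hP
  -- P maps the closed strip into the ball of radius 3R₁
  have hPmem : ∀ s : ℂ, s.re ∈ Set.Icc (0:ℝ) 1 → P s ∈ closedBall (x₀:ℂ) (3 * R₁) := by
    intro s hs
    rw [mem_closedBall, Complex.dist_eq]
    have h1 : (x₀:ℂ) + ↑R₁ * (Complex.exp (↑c * s) + Complex.exp (-(↑c * s))) / 2 - ↑x₀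
        = ↑R₁ * (Complex.exp (↑c * s) + Complex.exp (-(↑c * s))) / 2 := by ring
    rw [hP]
    simp only []
    rw [h1]
    rw [norm_div, norm_mul, Complex.norm_real, Complex.norm_two, Real.norm_eq_abs, abs_of_pos hR]
    have hre : (↑c * s).re = c * s.re := by simp [Complex.mul_re]
    have hre' : (-(↑c * s)).re = -(c * s.re) := by simp [hre]
    have h2 : ‖Complex.exp (↑c * s) + Complex.exp (-(↑c * s))‖
        ≤ Real.exp (c * s.re) + Real.exp (-(c * s.re)) := by
      calc ‖Complex.exp (↑c * s) + Complex.exp (-(↑c * s))‖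
          ≤ ‖Complex.exp (↑c * s)‖ + ‖Complex.exp (-(↑c * s))‖ :=
            norm_add_le _ _
        _ = Real.exp (c * s.re) + Real.exp (-(c * s.re)) := by
            rw [Complex.norm_exp, Complex.norm_exp, hre, hre']
    have h3 : Real.exp (c * s.re) + Real.exp (-(c * s.re)) ≤ 6 := by
      have hcosh : Real.cosh (c * s.re) ≤ Real.cosh c := by
        rw [Real.cosh_le_cosh]
        rw [_root_.abs_of_nonneg (by nlinarith [hs.1] : 0 ≤ c * s.re), _root_.abs_of_pos hcpos]
        nlinarith [hs.2]
      rw [Real.cosh_eq, Real.cosh_eq] at hcosh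
      have := exp_cJ
      have := exp_neg_cJ
      nlinarith [Real.sqrt_nonneg 2]
    calc R₁ * ‖Complex.exp (↑c * s) + Complex.exp (-(↑c * s))‖ / 2
        ≤ R₁ * 6 / 2 := by
          have := mul_le_mul_of_nonneg_left (le_trans h2 h3) hR.le
          linarith
      _ = 3 * R₁ := by ring
  -- P maps the line re = 0 to the segment
  have hPseg : ∀ s : ℂ, s.re = 0 → ∃ x ∈ Set.Icc (x₀ - R₁) (x₀ + R₁), P s = (x:ℂ) := by
    intro s hs0
    refine ⟨x₀ + R₁ * Real.cos (c * s.im), ?_, ?_⟩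
    · constructor <;> nlinarith [Real.neg_one_le_cos (c * s.im), Real.cos_le_one (c * s.im)]
    · have hre : (↑c * s).re = 0 := by simp [Complex.mul_re, hs0]
      have him : (↑c * s).im = c * s.im := by simp [Complex.mul_im, hs0]
      have key : Complex.exp (↑c * s) + Complex.exp (-(↑c * s))
          = 2 * (Real.cos (c * s.im) : ℂ) := by
        apply Complex.ext <;>
          simp [Complex.exp_re, Complex.exp_im, hre, him, Real.exp_zero,
            Real.cos_neg, Real.sin_neg, ← Complex.ofReal_mul, Complex.cos_ofReal_re,
            Complex.cos_ofReal_im] <;> ring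
      rw [hP]
      simp only []
      rw [key]
      push_cast
      ring
  -- surjectivity: w = P s for some s with re ∈ [0, 1/2]
  have hsurj : ∃ s : ℂ, s.re ∈ Set.Icc (0:ℝ) (1/2) ∧ P s = w := by
    set w' : ℂ := (w - x₀) / R₁ with hw'
    have hwabs : ‖w'‖ ≤ 1 := by
      rw [hw', norm_div, Complex.norm_real, Real.norm_eq_abs, _root_.abs_of_pos hR, div_le_one hR]
      rw [mem_closedBall, Complex.dist_eq] at hw
      exact hw
    obtain ⟨u, hu0, hu1, hu2, huw⟩ := joukowski_surj w' hwabs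
    refine ⟨(↑c)⁻¹ * Complex.log u, ?_, ?_⟩
    · have hre : ((↑c)⁻¹ * Complex.log u).re = c⁻¹ * Real.log (‖u‖) := by
        rw [← Complex.ofReal_inv]
        simp [Complex.mul_re, Complex.log_re]
      rw [hre]
      constructor
      · have h := Real.log_nonneg hu1
        have : (0:ℝ) ≤ c⁻¹ := inv_nonneg.mpr hcpos.le
        exact mul_nonneg this h
      · have hlog : Real.log (‖u‖) ≤ Real.log (1 + Real.sqrt 2) :=
          Real.log_le_log (by linarith) hu2
        have hcc : cJ = 2 * Real.log (1 + Real.sqrt 2) := rfl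
        rw [inv_mul_le_iff₀ hcpos, hcc]
        linarith
    · have hcs : (↑c : ℂ) * ((↑c)⁻¹ * Complex.log u) = Complex.log u := by
        rw [← mul_assoc, mul_inv_cancel₀ (by exact_mod_cast ne_of_gt hcpos : (↑c:ℂ) ≠ 0), one_mul]
      rw [hP]
      simp only []
      have hR1c : (R₁:ℂ) ≠ 0 := by exact_mod_cast ne_of_gt hR
      rw [hcs, Complex.exp_log hu0, Complex.exp_neg, Complex.exp_log hu0, huw]
      rw [hw']
      field_simp
      ring
  obtain ⟨s, hs, hPs⟩ := hsurj
  have hz : s ∈ Complex.HadamardThreeLines.verticalClosedStrip 0 1 := by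
    simp only [Complex.HadamardThreeLines.verticalClosedStrip, Set.mem_preimage, Set.mem_Icc]
    exact ⟨hs.1, by linarith [hs.2]⟩
  have hd : DiffContOnCl ℂ (fun z => f (P z)) (Complex.HadamardThreeLines.verticalStrip 0 1) := by
    apply Differentiable.diffContOnCl
    apply hf.comp
    rw [hP]
    apply Differentiable.add (differentiable_const _)
    apply Differentiable.div_const
    apply Differentiable.const_mul
    apply Differentiable.add
    · exact Complex.differentiable_exp.comp ((differentiable_id.const_mul _))
    · exact Complex.differentiable_exp.comp ((differentiable_id.const_mul _).neg)
  have hB : BddAbove ((norm ∘ (fun z => f (P z))) ''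
      Complex.HadamardThreeLines.verticalClosedStrip 0 1) := by
    refine ⟨b, ?_⟩
    rintro y ⟨z, hz', rfl⟩
    exact hball _ (hPmem z hz')
  have ha' : ∀ z ∈ Complex.re ⁻¹' {0}, ‖(fun z => f (P z)) z‖ ≤ a := by
    intro z hz'
    obtain ⟨x, hx, hPx⟩ := hPseg z hz'
    simp only [hPx]
    exact hseg x hx
  have hb' : ∀ z ∈ Complex.re ⁻¹' {1}, ‖(fun z => f (P z)) z‖ ≤ b := by
    intro z hz'
    simp only [Set.mem_preimage, Set.mem_singleton_iff] at hz'
    refine hball _ (hPmem z ?_)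
    rw [hz']
    exact ⟨zero_le_one, le_refl 1⟩
  have hh := Complex.HadamardThreeLines.norm_le_interp_of_mem_verticalClosedStrip'
    (f := fun z => f (P z)) zero_lt_one hz hd hB ha' hb'
  simp only [hPs, sub_zero, div_one] at hh
  exact le_trans hh (interp_le_sqrt ha0 hab hs.1 hs.2)

end siciakAux

/-- If the generalized Siciak extremal function of complex disks
`B_{R₁}(x₀)` (for the family `V` of entire functions and exponent function `φ`) is
bounded on all larger disks `B_{R₂}(x₀)`, then the same holds with the disk `B_{R₁}(x₀)`
replaced by the real segment `I_{R₁}(x₀) = [x₀ - R₁, x₀ + R₁]`. -/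
theorem siciak_disk_to_segment (V : ℕ → Set (ℂ → ℂ))
    (hmono : ∀ n, V n ⊆ V (n + 1))
    (hentire : ∀ n, ∀ f ∈ V n, Differentiable ℂ f)
    (φ : ℕ → ℝ) (hφ : ∀ n, 0 < φ n) (x₀ : ℝ)
    (hyp : ∀ R₁ R₂ : ℝ, 0 < R₁ → R₁ ≤ R₂ → ∃ C : ℝ, 1 ≤ C ∧
      ∀ f : ℂ → ℂ, (∃ n, 1 ≤ n ∧ f ∈ V n) → f ≠ 0 →
        ∀ z ∈ Metric.closedBall (x₀ : ℂ) R₂,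
          ‖f z‖ ≤ C ^ φ (degV V f) *
            sSup ((fun w : ℂ => ‖f w‖) '' Metric.closedBall (x₀ : ℂ) R₁)) :
    ∀ R₁ R₂ : ℝ, 0 < R₁ → R₁ ≤ R₂ → ∃ C' : ℝ, 1 ≤ C' ∧
      ∀ f : ℂ → ℂ, (∃ n, 1 ≤ n ∧ f ∈ V n) → f ≠ 0 →
        ∀ z ∈ Metric.closedBall (x₀ : ℂ) R₂,
          ‖f z‖ ≤ C' ^ φ (degV V f) *
            sSup ((fun x : ℝ => ‖f (x : ℂ)‖) '' Set.Icc (x₀ - R₁) (x₀ + R₁)) := by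
  intro R₁ R₂ hR₁ hR12
  obtain ⟨C, hC1, hC⟩ := hyp R₁ (max R₂ (3 * R₁)) hR₁ (le_trans hR12 (le_max_left _ _))
  have hC0 : (0:ℝ) ≤ C := le_trans zero_le_one hC1
  refine ⟨C ^ 2, by nlinarith, ?_⟩
  intro f hfV hf0 z hz
  obtain ⟨n, hn, hfn⟩ := hfV
  have hdiff : Differentiable ℂ f := hentire n f hfn
  have hcont : Continuous f := hdiff.continuous
  set φd := φ (degV V f) with hφd'
  have hφd : 0 ≤ φd := (hφ _).le
  have hCφ : 1 ≤ C ^ φd := by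
    have := Real.rpow_le_rpow_of_exponent_le hC1 hφd
    rwa [Real.rpow_zero] at this
  set MI := sSup ((fun x : ℝ => ‖f (x : ℂ)‖) '' Set.Icc (x₀ - R₁) (x₀ + R₁)) with hMI'
  set MB := sSup ((fun w : ℂ => ‖f w‖) '' Metric.closedBall (x₀ : ℂ) R₁) with hMB'
  have hbddI : BddAbove ((fun x : ℝ => ‖f (x : ℂ)‖) '' Set.Icc (x₀ - R₁) (x₀ + R₁)) :=
    (isCompact_Icc.image ((hcont.comp Complex.continuous_ofReal).norm)).bddAbove
  have hbddB : BddAbove ((fun w : ℂ => ‖f w‖) '' Metric.closedBall (x₀ : ℂ) R₁) :=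
    ((isCompact_closedBall _ _).image hcont.norm).bddAbove
  have hneI : ((fun x : ℝ => ‖f (x : ℂ)‖) '' Set.Icc (x₀ - R₁) (x₀ + R₁)).Nonempty :=
    (Set.nonempty_Icc.mpr (by linarith)).image _
  have hneB : ((fun w : ℂ => ‖f w‖) '' Metric.closedBall (x₀ : ℂ) R₁).Nonempty :=
    (Metric.nonempty_closedBall.mpr hR₁.le).image _
  have hMI0 : 0 ≤ MI := Real.sSup_nonneg (by rintro y ⟨x, _, rfl⟩; exact norm_nonneg _)
  have hMB0 : 0 ≤ MB := Real.sSup_nonneg (by rintro y ⟨x, _, rfl⟩; exact norm_nonneg _)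
  have hsubset : ((fun x : ℝ => ‖f (x : ℂ)‖) '' Set.Icc (x₀ - R₁) (x₀ + R₁)) ⊆
      ((fun w : ℂ => ‖f w‖) '' Metric.closedBall (x₀ : ℂ) R₁) := by
    rintro y ⟨x, hx, rfl⟩
    refine ⟨(x : ℂ), ?_, rfl⟩
    rw [Metric.mem_closedBall, Complex.dist_eq, ← Complex.ofReal_sub, Complex.norm_real, Real.norm_eq_abs]
    rw [abs_le]
    exact ⟨by linarith [hx.1], by linarith [hx.2]⟩
  have hMIMB : MI ≤ MB := csSup_le_csSup hbddB hneI hsubset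
  have hseg : ∀ x ∈ Set.Icc (x₀ - R₁) (x₀ + R₁), ‖f (x : ℂ)‖ ≤ MI := fun x hx =>
    le_csSup hbddI ⟨x, hx, rfl⟩
  have hball3 : ∀ w ∈ Metric.closedBall (x₀ : ℂ) (3 * R₁), ‖f w‖ ≤ C ^ φd * MB := by
    intro w hw
    exact hC f ⟨n, hn, hfn⟩ hf0 w
      (Metric.closedBall_subset_closedBall (le_max_right _ _) hw)
  have hab : MI ≤ C ^ φd * MB := le_trans hMIMB (le_mul_of_one_le_left hMB0 hCφ)
  have key := disk_le_sqrt_segment_disk f hdiff x₀ R₁ hR₁ MI (C ^ φd * MB) hMI0 hab hseg hball3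
  have hMBsqrt : MB ≤ Real.sqrt (MI * (C ^ φd * MB)) := by
    apply csSup_le hneB
    rintro y ⟨w, hw, rfl⟩
    exact key w hw
  have hsq : MB ^ 2 ≤ MI * (C ^ φd * MB) := by
    have hX : 0 ≤ MI * (C ^ φd * MB) := by positivity
    nlinarith [Real.sq_sqrt hX, Real.sqrt_nonneg (MI * (C ^ φd * MB))]
  have hMBle : MB ≤ C ^ φd * MI := by
    rcases eq_or_lt_of_le hMB0 with h0 | hpos
    · rw [← h0]; positivity
    · nlinarith
  have hz' : z ∈ Metric.closedBall (x₀ : ℂ) (max R₂ (3 * R₁)) :=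
    Metric.closedBall_subset_closedBall (le_max_left _ _) hz
  have h1 : ‖f z‖ ≤ C ^ φd * MB := hC f ⟨n, hn, hfn⟩ hf0 z hz'
  have h2 : C ^ φd * MB ≤ C ^ φd * (C ^ φd * MI) :=
    mul_le_mul_of_nonneg_left hMBle (by positivity)
  have h3 : (C ^ 2) ^ φd = C ^ φd * C ^ φd := by
    rw [pow_two, Real.mul_rpow hC0 hC0]
  calc ‖f z‖ ≤ C ^ φd * MB := h1
    _ ≤ C ^ φd * (C ^ φd * MI) := h2
    _ = (C ^ 2) ^ φd * MI := by rw [h3]; ring
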